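/- Let θ(λ,μ) = inf_{y∈Y} {f(y) + ⟨λ, Ay − b⟩ + ⟨μ, g(y)⟩} be the dual function of the convex problem min{f(y) : Ay = b, g(y) ≤ 0, y ∈ Y}, and let F = A·Aff(Y) − b. Then for every λ ∈ ℝ^q and μ ≥ 0, θ(λ, μ) = θ(Π_F(λ), μ), where Π_F(λ) is the orthogonal projection of λ onto the linear span of F. Consequently, if F^⊥ ≠ {0}, then for any ε-optimal dual solution (λ(ε), μ(ε)) and any λ' ∈ F^⊥, the point (λ(ε) + λ', μ(ε)) is also ε-optimal; in particular the set of ε-optimal dual solutions is unbounded. -/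

import Mathlib

open Matrix

/-- The dual function value set at λ over y ∈ Y. -/
def stmt10LagrSet {n q p : ℕ} (Y : Set (EuclideanSpace ℝ (Fin n)))
    (A : Matrix (Fin q) (Fin n) ℝ) (b : Fin q → ℝ)
    (f : EuclideanSpace ℝ (Fin n) → ℝ) (g : EuclideanSpace ℝ (Fin n) → Fin p → ℝ)
    (lam : EuclideanSpace ℝ (Fin q)) (mu : Fin p → ℝ) : Set ℝ :=
  {v : ℝ | ∃ y ∈ Y, v = f y + lam ⬝ᵥ (A *ᵥ y - b) + mu ⬝ᵥ g y}

/-- The dual function θ(λ, μ) = inf_{y ∈ Y} {f(y) + ⟨λ, Ay − b⟩ + ⟨μ, g(y)⟩}. -/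
noncomputable def stmt10Theta {n q p : ℕ} (Y : Set (EuclideanSpace ℝ (Fin n)))
    (A : Matrix (Fin q) (Fin n) ℝ) (b : Fin q → ℝ)
    (f : EuclideanSpace ℝ (Fin n) → ℝ) (g : EuclideanSpace ℝ (Fin n) → Fin p → ℝ)
    (lam : EuclideanSpace ℝ (Fin q)) (mu : Fin p → ℝ) : ℝ :=
  sInf (stmt10LagrSet Y A b f g lam mu)

lemma stmt10_dot_zero {n q : ℕ} {Y : Set (EuclideanSpace ℝ (Fin n))}
    {A : Matrix (Fin q) (Fin n) ℝ} {b : Fin q → ℝ}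
    {F : Submodule ℝ (EuclideanSpace ℝ (Fin q))}
    (hF : F = Submodule.span ℝ
      {z : EuclideanSpace ℝ (Fin q) |
        ∃ y ∈ (affineSpan ℝ Y : Set (EuclideanSpace ℝ (Fin n))), z = A *ᵥ y - b})
    {lam' : EuclideanSpace ℝ (Fin q)} (hlam' : lam' ∈ Fᗮ)
    {y : EuclideanSpace ℝ (Fin n)} (hy : y ∈ Y) :
    lam' ⬝ᵥ (A *ᵥ y - b) = 0 := by
  set z : EuclideanSpace ℝ (Fin q) := WithLp.toLp 2 (A *ᵥ y - b) with hzdef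
  have hz : z ∈ F := by
    rw [hF]
    exact Submodule.subset_span ⟨y, subset_affineSpan ℝ Y hy, rfl⟩
  have h0 : (inner ℝ z lam' : ℝ) = 0 := hlam' _ hz
  have : lam' ⬝ᵥ (A *ᵥ y - b) = (inner ℝ z lam' : ℝ) := by
    simp [hzdef, dotProduct, PiLp.inner_apply, RCLike.inner_apply, mul_comm]
  rw [this, h0]

lemma stmt10_theta_add {n q p : ℕ} {Y : Set (EuclideanSpace ℝ (Fin n))}
    {A : Matrix (Fin q) (Fin n) ℝ} {b : Fin q → ℝ}
    (f : EuclideanSpace ℝ (Fin n) → ℝ) (g : EuclideanSpace ℝ (Fin n) → Fin p → ℝ)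
    {F : Submodule ℝ (EuclideanSpace ℝ (Fin q))}
    (hF : F = Submodule.span ℝ
      {z : EuclideanSpace ℝ (Fin q) |
        ∃ y ∈ (affineSpan ℝ Y : Set (EuclideanSpace ℝ (Fin n))), z = A *ᵥ y - b})
    (lam : EuclideanSpace ℝ (Fin q)) {lam' : EuclideanSpace ℝ (Fin q)} (hlam' : lam' ∈ Fᗮ)
    (mu : Fin p → ℝ) :
    stmt10Theta Y A b f g (lam + lam') mu = stmt10Theta Y A b f g lam mu := by
  unfold stmt10Theta
  congr 1
  unfold stmt10LagrSet
  ext v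
  constructor
  · rintro ⟨y, hy, rfl⟩
    exact ⟨y, hy, by rw [WithLp.ofLp_add, add_dotProduct, stmt10_dot_zero hF hlam' hy]; ring⟩
  · rintro ⟨y, hy, rfl⟩
    exact ⟨y, hy, by rw [WithLp.ofLp_add, add_dotProduct, stmt10_dot_zero hF hlam' hy]; ring⟩
/-- The dual function is invariant under orthogonal projection of λ onto the
span of F = A·Aff(Y) − b; consequently if F^⊥ ≠ {0} the set of ε-optimal dual
solutions is unbounded. -/
theorem stmt_10 {n q p : ℕ}
    (Y : Set (EuclideanSpace ℝ (Fin n))) (hYcl : IsClosed Y) (hYconv : Convex ℝ Y)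
    (A : Matrix (Fin q) (Fin n) ℝ) (b : Fin q → ℝ)
    (hb : ∃ y ∈ (affineSpan ℝ Y : Set (EuclideanSpace ℝ (Fin n))), A *ᵥ y = b)
    (f : EuclideanSpace ℝ (Fin n) → ℝ) (g : EuclideanSpace ℝ (Fin n) → Fin p → ℝ)
    (hfconv : ConvexOn ℝ Y f) (hgconv : ∀ i, ConvexOn ℝ Y (fun y => g y i))
    -- F = span of {Ay − b : y ∈ Aff(Y)}:
    (F : Submodule ℝ (EuclideanSpace ℝ (Fin q)))
    (hF : F = Submodule.span ℝ
      {z : EuclideanSpace ℝ (Fin q) |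
        ∃ y ∈ (affineSpan ℝ Y : Set (EuclideanSpace ℝ (Fin n))), z = A *ᵥ y - b}) :
    (∀ (lam : EuclideanSpace ℝ (Fin q)) (mu : Fin p → ℝ), 0 ≤ mu →
      stmt10Theta Y A b f g lam mu =
        stmt10Theta Y A b f g (Submodule.orthogonalProjectionOnto F lam : EuclideanSpace ℝ (Fin q)) mu) ∧
    (Fᗮ ≠ ⊥ →
      ∀ (dstar ε : ℝ), 0 ≤ ε →
      (∀ (lam : EuclideanSpace ℝ (Fin q)) (mu : Fin p → ℝ), 0 ≤ mu →
        stmt10Theta Y A b f g lam mu ≤ dstar) →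
      ∀ (lam : EuclideanSpace ℝ (Fin q)) (mu : Fin p → ℝ), 0 ≤ mu →
        stmt10Theta Y A b f g lam mu ≥ dstar - ε →
        (∀ lam' ∈ Fᗮ, stmt10Theta Y A b f g (lam + lam') mu ≥ dstar - ε) ∧
        (∀ R : ℝ, ∃ lam'' : EuclideanSpace ℝ (Fin q),
          stmt10Theta Y A b f g lam'' mu ≥ dstar - ε ∧ R ≤ ‖lam''‖)) := by
  constructor
  · intro lam mu _
    have hsub : lam - (Submodule.orthogonalProjectionOnto F lam : EuclideanSpace ℝ (Fin q)) ∈ Fᗮ :=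
      F.sub_starProjection_mem_orthogonal lam
    have := stmt10_theta_add f g hF
      (Submodule.orthogonalProjectionOnto F lam : EuclideanSpace ℝ (Fin q)) hsub mu
    rw [← this]
    congr 1
    abel
  · intro hFo dstar ε hε hub lam mu hmu hlb
    constructor
    · intro lam' hlam'
      rw [stmt10_theta_add f g hF lam hlam' mu]
      exact hlb
    · intro R
      obtain ⟨v, hvF, hv0⟩ := Submodule.exists_mem_ne_zero_of_ne_bot hFo
      have hvn : (0:ℝ) < ‖v‖ := norm_pos_iff.2 hv0
      set t : ℝ := (R + ‖lam‖) / ‖v‖ with ht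
      have htv : t • v ∈ Fᗮ := Submodule.smul_mem _ _ hvF
      refine ⟨lam + t • v, ?_, ?_⟩
      · rw [stmt10_theta_add f g hF lam htv mu]; exact hlb
      · have h1 : ‖t • v‖ ≤ ‖lam + t • v‖ + ‖lam‖ := by
          have h2 := norm_add_le (lam + t • v) (-lam)
          simpa using h2
        have h3 : ‖t • v‖ = |t| * ‖v‖ := by rw [norm_smul, Real.norm_eq_abs]
        have h4 : t * ‖v‖ = R + ‖lam‖ := by rw [ht, div_mul_cancel₀ _ hvn.ne']
        have h5 : t ≤ |t| := le_abs_self t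
        nlinarith [abs_nonneg t]
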